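/- Let R be a commutative ring and M a free R-module of rank 2m equipped with a symmetric bilinear form B that is perfect (i.e., the induced R-linear map M → M* = Hom_R(M, R) is an isomorphism). Suppose M = M₁ ⊕ M₂ where M₁ and M₂ are free R-submodules of rank m with B(M₁, M₁) = 0 and B(M₂, M₂) = 0. Then there exists an R-basis e₁, f₁, e₂, f₂, …, e_m, f_m of M with each eᵢ ∈ M₁ and each fᵢ ∈ M₂ such that B(eᵢ, fⱼ) = δᵢⱼ, B(eᵢ, eⱼ) = 0, and B(fᵢ, fⱼ) = 0 for all i, j; equivalently, the Gram matrix of B in this basis is the block-diagonal matrix J(2m) with m diagonal blocks [[0,1],[1,0]]. -/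

import Mathlib

/-- Let `R` be a commutative ring and `M` a free `R`-module of rank `2m` equipped with a
perfect symmetric bilinear form `B`.  If `M = M₁ ⊕ M₂` with `M₁`, `M₂` free submodules of
rank `m` that are totally isotropic for `B`, then there is a basis
`e₁, f₁, …, e_m, f_m` of `M` with `eᵢ ∈ M₁`, `fᵢ ∈ M₂`, `B(eᵢ, fⱼ) = δᵢⱼ`,
`B(eᵢ, eⱼ) = 0` and `B(fᵢ, fⱼ) = 0`; i.e. the Gram matrix of `B` in this basis is the
block-diagonal matrix `J(2m)` with `m` blocks `[[0,1],[1,0]]`. -/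
theorem exists_hyperbolic_basis (R : Type*) [CommRing R]
    (M : Type*) [AddCommGroup M] [Module R M] (m : ℕ)
    (b : Module.Basis (Fin (2*m)) R M)
    (B : M →ₗ[R] M →ₗ[R] R)
    (hsymm : ∀ x y : M, B x y = B y x)
    (hperf : Function.Bijective fun x : M => B x)
    (M₁ M₂ : Submodule R M)
    (b₁ : Module.Basis (Fin m) R M₁) (b₂ : Module.Basis (Fin m) R M₂)
    (hcompl : IsCompl M₁ M₂)
    (h₁ : ∀ x ∈ M₁, ∀ y ∈ M₁, B x y = 0)
    (h₂ : ∀ x ∈ M₂, ∀ y ∈ M₂, B x y = 0) :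
    ∃ (e f : Fin m → M) (bas : Module.Basis (Fin m ⊕ Fin m) R M),
      (∀ i, e i ∈ M₁) ∧ (∀ i, f i ∈ M₂) ∧
      (∀ i, bas (Sum.inl i) = e i) ∧ (∀ i, bas (Sum.inr i) = f i) ∧
      (∀ i j, B (e i) (f j) = if i = j then 1 else 0) ∧
      (∀ i j, B (e i) (e j) = 0) ∧
      (∀ i j, B (f i) (f j) = 0) := by
  classical
  -- The pairing `M₂ → (Fin m → R)`, `y ↦ (i ↦ B (b₁ i) y)`.
  set P : M₂ →ₗ[R] (Fin m → R) :=
    { toFun := fun y i => B (b₁ i) (y : M)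
      map_add' := by intro y z; funext i; simp
      map_smul' := by intro r y; funext i; simp } with hP
  have hPapp : ∀ (y : M₂) (i : Fin m), P y i = B (b₁ i) (y : M) := fun _ _ => rfl
  -- injectivity of P
  have hPinj : Function.Injective P := by
    rw [← LinearMap.ker_eq_bot, LinearMap.ker_eq_bot']
    intro y hy
    have hy' : ∀ i, B (b₁ i) (y : M) = 0 := fun i => congrFun hy i
    have hall : ∀ x : M, B x (y : M) = 0 := by
      intro x
      have hker : (B.flip (y : M)).comp M₁.subtype = 0 := by
        apply b₁.ext
        intro i
        simpa using hy' i
      have hx : x ∈ M₁ ⊔ M₂ := by rw [hcompl.sup_eq_top]; trivial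
      obtain ⟨x₁, hx₁, x₂, hx₂, rfl⟩ := Submodule.mem_sup.mp hx
      have e1 : B x₁ (y : M) = 0 := by
        have := congrFun (congrArg DFunLike.coe hker) ⟨x₁, hx₁⟩
        simpa using this
      have e2 : B x₂ (y : M) = 0 := h₂ x₂ hx₂ y y.2
      simp [map_add, LinearMap.add_apply, e1, e2]
    have hBy : B (y : M) = B (0 : M) := by
      ext x
      simp [hsymm (y : M) x, hall x]
    have := hperf.1 hBy
    exact Subtype.ext (by simpa using this)
  -- surjectivity of P
  have hPsurj : Function.Surjective P := by
    intro c
    set φ : M →ₗ[R] R :=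
      (b₁.constr R c).comp (M₁.linearProjOfIsCompl M₂ hcompl) with hφ
    obtain ⟨x, hx⟩ := hperf.2 φ
    have hxt : x ∈ M₁ ⊔ M₂ := by rw [hcompl.sup_eq_top]; trivial
    obtain ⟨x₁, hx₁, x₂, hx₂, hxeq⟩ := Submodule.mem_sup.mp hxt
    refine ⟨⟨x₂, hx₂⟩, ?_⟩
    funext i
    have hx' : B x = φ := hx
    have h1 : B x (b₁ i : M) = c i := by
      rw [hx']
      simp [hφ, Submodule.linearProjOfIsCompl, Submodule.projectionOnto_apply_left]
    have h2 : B x₁ (b₁ i : M) = 0 := h₁ x₁ hx₁ _ (b₁ i).2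
    have h3 : B x₂ (b₁ i : M) = c i := by
      have := h1
      rw [← hxeq] at this
      simpa [map_add, LinearMap.add_apply, h2] using this
    rw [hPapp]
    rw [hsymm]
    exact h3
  -- the dual basis of b₁ inside M₂
  let E : M₂ ≃ₗ[R] (Fin m → R) := LinearEquiv.ofBijective P ⟨hPinj, hPsurj⟩
  let bf : Module.Basis (Fin m) R M₂ := (Pi.basisFun R (Fin m)).map E.symm
  have hbf : ∀ j i, B (b₁ i : M) (bf j : M) = if i = j then 1 else 0 := by
    intro j i
    have : P (bf j) = Pi.single j 1 := by
      have : E (bf j) = Pi.basisFun R (Fin m) j := by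
        simp [bf, Module.Basis.map_apply]
      rw [Pi.basisFun_apply] at this; exact this
    have := congrFun this i
    rw [hPapp] at this
    rw [this, Pi.single_apply]
  -- the combined basis
  let bas : Module.Basis (Fin m ⊕ Fin m) R M :=
    (b₁.prod bf).map (Submodule.prodEquivOfIsCompl M₁ M₂ hcompl)
  refine ⟨fun i => (b₁ i : M), fun i => (bf i : M), bas, fun i => (b₁ i).2,
    fun i => (bf i).2, ?_, ?_, ?_, ?_, ?_⟩
  · intro i
    simp [bas, Module.Basis.map_apply, Module.Basis.prod_apply,
      Submodule.coe_prodEquivOfIsCompl']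
  · intro i
    simp [bas, Module.Basis.map_apply, Module.Basis.prod_apply,
      Submodule.coe_prodEquivOfIsCompl']
  · intro i j
    exact hbf j i
  · intro i j
    exact h₁ _ (b₁ i).2 _ (b₁ j).2
  · intro i j
    exact h₂ _ (bf i).2 _ (bf j).2
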